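/- arXiv:1201.4363 — 3 statements merged into one kernel-verified Lean document; each statement's English description precedes it below -/
import Mathlib

section
/- Let $G$ be the wreath product $S_3 \wr \mathbb{Z}$ of the symmetric group on three letters with the infinite cyclic group $\langle t \rangle$ (restricted wreath product). Then every homomorphism $\theta$ from $G$ to a finite group kills the commutator subgroup of the base copy of $S_3$ at position $0$; consequently $G$ is not residually finite. -/
/-- The base of the restricted wreath product `A ≀ ℤ`: finitely supported
functions `ℤ → A`. -/
def wrBase (A : Type) [Group A] : Subgroup (∀ _ : ℤ, A) where
  carrier := {f | (Function.mulSupport f).Finite}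
  mul_mem' := by
    intro f g hf hg
    exact (hf.union hg).subset (Function.mulSupport_mul f g)
  one_mem' := by simp [Function.mulSupport_one]
  inv_mem' := by
    intro f hf
    simpa [Function.mulSupport_inv] using hf

/-- The shift automorphism of the base. -/
def wrShift (A : Type) [Group A] : MulAut (wrBase A) where
  toFun f := ⟨fun n => (f : ∀ _ : ℤ, A) (n + 1), by
    have hf := f.2
    have : (Function.mulSupport fun n => (f : ∀ _ : ℤ, A) (n + 1)) ⊆
        (fun n : ℤ => n + 1) ⁻¹' Function.mulSupport (f : ∀ _ : ℤ, A) := by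
      intro n hn; exact hn
    exact (hf.preimage (fun x _ y _ h => by omega)).subset this⟩
  invFun f := ⟨fun n => (f : ∀ _ : ℤ, A) (n - 1), by
    have hf := f.2
    have : (Function.mulSupport fun n => (f : ∀ _ : ℤ, A) (n - 1)) ⊆
        (fun n : ℤ => n - 1) ⁻¹' Function.mulSupport (f : ∀ _ : ℤ, A) := by
      intro n hn; exact hn
    exact (hf.preimage (fun x _ y _ h => by omega)).subset this⟩
  left_inv f := by ext n; simp
  right_inv f := by ext n; simp
  map_mul' f g := rfl

/-- `ℤ` acts on the base by shifting coordinates. -/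
def wrAct (A : Type) [Group A] : Multiplicative ℤ →* MulAut (wrBase A) :=
  zpowersHom _ (wrShift A)

/-- The restricted wreath product `A ≀ ℤ`. -/
abbrev Wr (A : Type) [Group A] := wrBase A ⋊[wrAct A] Multiplicative ℤ

/-- The copy of `A` sitting at position `0` of the base, inside `A ≀ ℤ`. -/
def atZero (A : Type) [Group A] : A →* Wr A :=
  SemidirectProduct.inl.comp
    { toFun := fun g => ⟨fun n => if n = 0 then g else 1, by
        apply Set.Finite.subset (Set.finite_singleton (0 : ℤ))
        intro n hn
        simp only [Function.mem_mulSupport] at hn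
        by_contra h
        exact hn (if_neg h)⟩
      map_one' := by ext n; simp
      map_mul' := fun g h => by
        ext n
        by_cases h0 : n = 0 <;> simp [h0] }

/-- A group is residually finite if every nontrivial element survives in some
finite quotient. -/
def ResiduallyFinite (G : Type) [Group G] : Prop :=
  ∀ g : G, g ≠ 1 → ∃ (F : Type) (_ : Group F) (_ : Finite F) (θ : G →* F), θ g ≠ 1


namespace Stmt4Aux

variable (A : Type) [Group A]

/-- The element of the base supported at position `n` with value `a`. -/
def wrE (n : ℤ) (a : A) : wrBase A :=
  ⟨fun k => if k = n then a else 1, by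
    apply Set.Finite.subset (Set.finite_singleton n)
    intro k hk
    simp only [Function.mem_mulSupport] at hk
    by_contra h
    exact hk (if_neg h)⟩

lemma shift_pow (m : ℕ) (f : wrBase A) (k : ℤ) :
    (((wrShift A ^ m) f : wrBase A) : ∀ _ : ℤ, A) k = (f : ∀ _ : ℤ, A) (k + m) := by
  induction m generalizing f k with
  | zero => simp
  | succ n ih =>
    rw [pow_succ]
    have h1 : ((wrShift A ^ n * wrShift A) f) = (wrShift A ^ n) (wrShift A f) := rfl
    rw [h1, ih (wrShift A f) k]
    show (f : ∀ _ : ℤ, A) (k + n + 1) = (f : ∀ _ : ℤ, A) (k + (n + 1 : ℕ))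
    push_cast
    ring_nf

lemma shift_pow_E (m : ℕ) (a : A) :
    (wrShift A ^ m) (wrE A 0 a) = wrE A (-(m : ℤ)) a := by
  apply Subtype.ext
  funext k
  rw [shift_pow]
  simp only [wrE]
  by_cases h : k = -(m : ℤ)
  · rw [if_pos (by omega), if_pos h]
  · rw [if_neg (by omega), if_neg h]

lemma comm_E (m : ℤ) (hm : m ≠ 0) (a b : A) :
    wrE A 0 a * wrE A m b = wrE A m b * wrE A 0 a := by
  apply Subtype.ext
  funext k
  show (wrE A 0 a : ∀ _ : ℤ, A) k * (wrE A m b : ∀ _ : ℤ, A) k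
      = (wrE A m b : ∀ _ : ℤ, A) k * (wrE A 0 a : ∀ _ : ℤ, A) k
  simp only [wrE]
  by_cases h0 : k = 0
  · have hkm : k ≠ m := by omega
    simp [h0, hkm, if_neg (show ¬ ((0:ℤ) = m) by omega)]
  · simp [h0]

lemma theta_comm (F : Type) [Group F] [Finite F] (θ : Wr A →* F) (a b : A) :
    Commute (θ (atZero A a)) (θ (atZero A b)) := by
  set t : Wr A := SemidirectProduct.inr (Multiplicative.ofAdd (1 : ℤ)) with ht
  set m : ℕ := orderOf (θ t) with hm
  have hmpos : 0 < m := orderOf_pos _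
  have hconj : t ^ m * atZero A b * (t ^ m)⁻¹
      = SemidirectProduct.inl (wrE A (-(m : ℤ)) b) := by
    have h1 : atZero A b = SemidirectProduct.inl (wrE A 0 b) := rfl
    have h2 : t ^ m = SemidirectProduct.inr ((Multiplicative.ofAdd (1 : ℤ)) ^ m) := by
      rw [ht, ← map_pow]
    rw [h1, h2, ← map_inv, ← SemidirectProduct.inl_aut]
    congr 1
    have h3 : wrAct A ((Multiplicative.ofAdd (1 : ℤ)) ^ m) = wrShift A ^ m := by
      show zpowersHom _ (wrShift A) _ = _
      rw [zpowersHom_apply]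
      have : Multiplicative.toAdd ((Multiplicative.ofAdd (1 : ℤ)) ^ m) = (m : ℤ) := by
        simp
      rw [this, zpow_natCast]
    rw [h3, shift_pow_E]
  have hG : atZero A a * (t ^ m * atZero A b * (t ^ m)⁻¹)
      = (t ^ m * atZero A b * (t ^ m)⁻¹) * atZero A a := by
    rw [hconj]
    show SemidirectProduct.inl (wrE A 0 a) * _ = _ * SemidirectProduct.inl (wrE A 0 a)
    rw [← map_mul, ← map_mul, comm_E A _ (by exact_mod_cast (by omega : -(m:ℤ) ≠ 0)) a b]
  have hθt : θ t ^ m = 1 := pow_orderOf_eq_one _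
  have h := congrArg θ hG
  simp only [map_mul, map_inv, map_pow, hθt, one_mul, inv_one, mul_one] at h
  exact h

lemma kills (F : Type) [Group F] [Finite F] (θ : Wr A →* F) :
    ∀ x ∈ commutator A, θ (atZero A x) = 1 := by
  intro x hx
  have hle : commutator A ≤ (θ.comp (atZero A)).ker := by
    rw [commutator_def, Subgroup.commutator_le]
    intro g1 _ g2 _
    rw [MonoidHom.mem_ker, map_commutatorElement]
    exact commutatorElement_eq_one_iff_commute.2 (theta_comm A F θ g1 g2)
  exact hle hx

end Stmt4Aux

open scoped commutatorElement

/-- Every homomorphism from `S₃ ≀ ℤ` to a finite group kills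
the commutator subgroup of the copy of `S₃` at position `0`; consequently
`S₃ ≀ ℤ` is not residually finite. -/
theorem stmt4 :
    (∀ (F : Type) (_ : Group F) (_ : Finite F)
        (θ : Wr (Equiv.Perm (Fin 3)) →* F),
      ∀ x ∈ commutator (Equiv.Perm (Fin 3)), θ (atZero _ x) = 1) ∧
    ¬ ResiduallyFinite (Wr (Equiv.Perm (Fin 3))) := by
  constructor
  · intro F instG instF θ x hx
    exact Stmt4Aux.kills _ F θ x hx
  · intro hRF
    set a : Equiv.Perm (Fin 3) := Equiv.swap 0 1 with ha
    set b : Equiv.Perm (Fin 3) := Equiv.swap 0 2 with hb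
    have hxc : ⁅a, b⁆ ∈ commutator (Equiv.Perm (Fin 3)) := by
      rw [commutator_def]
      exact Subgroup.commutator_mem_commutator (Subgroup.mem_top a) (Subgroup.mem_top b)
    have hxne : ⁅a, b⁆ ≠ (1 : Equiv.Perm (Fin 3)) := by decide
    have hne : atZero (Equiv.Perm (Fin 3)) ⁅a, b⁆ ≠ 1 := by
      intro h
      apply hxne
      have := congrArg (fun g : Wr (Equiv.Perm (Fin 3)) =>
        (g.left : ∀ _ : ℤ, Equiv.Perm (Fin 3)) 0) h
      simpa [atZero, -map_commutatorElement] using this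
    obtain ⟨F, instG, instF, θ, hθ⟩ := hRF _ hne
    exact hθ (Stmt4Aux.kills _ F θ _ hxc)
end

section
/- Let $r \geq 2$ and let $X$ be the set of elementary matrices $E_{i,j}^{\pm 1}$ ($1 \leq i < j \leq r$) in the group $UT_r(\mathbb{Z})$ of upper unitriangular $r \times r$ integer matrices. If $w$ is a product of $n$ elements of $X$, then every entry $a$ of the matrix $w$ lying on the $i$-th superdiagonal satisfies $|a| \leq n^i$. -/
private lemma pow_aux (n a d : ℕ) (h : a < d) : n ^ d + n ^ a ≤ (n + 1) ^ d := by
  obtain ⟨e, rfl⟩ : ∃ e, d = e + 1 := ⟨d - 1, by omega⟩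
  have ha : a ≤ e := by omega
  calc n ^ (e + 1) + n ^ a = n * n ^ e + n ^ a := by ring
    _ ≤ n * (n + 1) ^ e + (n + 1) ^ e := by
        have h1 : n ^ e ≤ (n + 1) ^ e := Nat.pow_le_pow_left (Nat.le_succ n) e
        have h2 : n ^ a ≤ (n + 1) ^ e :=
          le_trans (Nat.pow_le_pow_left (Nat.le_succ n) a)
            (Nat.pow_le_pow_right (by omega) ha)
        exact Nat.add_le_add (Nat.mul_le_mul_left n h1) h2
    _ = (n + 1) ^ (e + 1) := by ring

private lemma main_aux (r : ℕ) (L : List (Matrix (Fin r) (Fin r) ℤ))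
    (hL : ∀ A ∈ L, ∃ i j : Fin r, i < j ∧
      (A = 1 + Matrix.single i j 1 ∨ A = 1 - Matrix.single i j 1)) :
    (∀ k l : Fin r, l ≤ k → L.prod k l = (1 : Matrix (Fin r) (Fin r) ℤ) k l) ∧
    (∀ k l : Fin r, k < l →
      |L.prod k l| ≤ (L.length : ℤ) ^ ((l : ℕ) - (k : ℕ))) := by
  induction L with
  | nil =>
      constructor
      · intro k l _; simp
      · intro k l hkl
        have hd : 1 ≤ (l : ℕ) - (k : ℕ) := by
          have := (Fin.lt_def).mp hkl; omega
        have hne : k ≠ l := ne_of_lt hkl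
        simp [Matrix.one_apply_ne hne, zero_pow (by omega : (l : ℕ) - (k : ℕ) ≠ 0)]
  | cons A L ih =>
      obtain ⟨i, j, hij, hA⟩ := hL A (List.mem_cons_self)
      have ih' := ih (fun B hB => hL B (List.mem_cons_of_mem A hB))
      obtain ⟨ih1, ih2⟩ := ih'
      set w := L.prod with hw
      set n := L.length with hn
      -- entry formula
      have hentry : ∀ k l : Fin r, ∃ ε : ℤ, |ε| ≤ 1 ∧
          (A :: L).prod k l = w k l + ε * (if k = i then w j l else 0) := by
        intro k l
        rw [List.prod_cons]
        rcases hA with rfl | rfl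
        · refine ⟨1, by norm_num, ?_⟩
          rw [add_mul, one_mul, Matrix.add_apply]
          by_cases hk : k = i
          · subst hk; simp; rfl
          · simp [hk, Matrix.single_mul_apply_of_ne 1 i j k l hk]; rfl
        · refine ⟨-1, by norm_num, ?_⟩
          rw [sub_mul, one_mul, Matrix.sub_apply]
          by_cases hk : k = i
          · subst hk; simp; ring
          · simp [hk, Matrix.single_mul_apply_of_ne 1 i j k l hk]; rfl
      constructor
      · intro k l hlk
        obtain ⟨ε, _, he⟩ := hentry k l
        rw [he, ih1 k l hlk]
        by_cases hk : k = i
        · have hlj : l ≠ j := by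
            intro h; subst h; exact absurd (hlk.trans_lt (hk ▸ hij)) (lt_irrefl l)
          rw [if_pos hk, ih1 j l (le_of_lt ((hlk.trans_lt (hk ▸ hij))))]
          simp [Matrix.one_apply_ne (Ne.symm hlj)]
        · simp [hk]
      · intro k l hkl
        obtain ⟨ε, hε, he⟩ := hentry k l
        set d := (l : ℕ) - (k : ℕ) with hd
        have hd1 : 1 ≤ d := by have := (Fin.lt_def).mp hkl; omega
        have hwkl : |w k l| ≤ (n : ℤ) ^ d := ih2 k l hkl
        have hlen : ((A :: L).length : ℤ) = (n : ℤ) + 1 := by simp [hn]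
        rw [he, hlen]
        have hmono : (n : ℤ) ^ d ≤ ((n : ℤ) + 1) ^ d := by
          exact_mod_cast Nat.pow_le_pow_left (Nat.le_succ n) d
        calc |w k l + ε * (if k = i then w j l else 0)|
            ≤ |w k l| + |ε * (if k = i then w j l else 0)| := abs_add_le _ _
          _ ≤ |w k l| + |if k = i then w j l else 0| := by
              rw [abs_mul]
              nlinarith [abs_nonneg (if k = i then w j l else 0)]
          _ ≤ ((n : ℤ) + 1) ^ d := by
              by_cases hk : k = i
              · rw [if_pos hk]
                rcases lt_trichotomy j l with hjl | hjl | hjl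
                · -- j < l
                  have hjv : (k : ℕ) < (j : ℕ) := by
                    have := (Fin.lt_def).mp hij; omega
                  have ha : (l : ℕ) - (j : ℕ) < d := by
                    have h1 := (Fin.lt_def).mp hjl
                    have h2 := (Fin.lt_def).mp hkl
                    omega
                  have hb : |w j l| ≤ (n : ℤ) ^ ((l : ℕ) - (j : ℕ)) := ih2 j l hjl
                  have := pow_aux n ((l : ℕ) - (j : ℕ)) d ha
                  have hcast : (n : ℤ) ^ d + (n : ℤ) ^ ((l : ℕ) - (j : ℕ))
                      ≤ ((n : ℤ) + 1) ^ d := by exact_mod_cast this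
                  linarith
                · -- j = l
                  subst hjl
                  rw [ih1 j j le_rfl]
                  simp only [Matrix.one_apply_eq, abs_one]
                  have := pow_aux n 0 d (by omega)
                  have hcast : (n : ℤ) ^ d + 1 ≤ ((n : ℤ) + 1) ^ d := by
                    have : (n : ℤ) ^ d + (n : ℤ) ^ 0 ≤ ((n : ℤ) + 1) ^ d := by
                      exact_mod_cast this
                    simpa using this
                  linarith
                · -- l < j
                  rw [ih1 j l (le_of_lt hjl), Matrix.one_apply_ne (ne_of_gt hjl)]
                  simp only [abs_zero, add_zero]
                  linarith
              · rw [if_neg hk]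
                simp only [abs_zero, add_zero]
                linarith

/-- If `w` is a product of `n` elementary unitriangular
matrices `E_{i,j}^{±1}` (`i < j`) in `UT_r(ℤ)`, then every entry of `w` on the
`i`-th superdiagonal (position `(k, l)` with `l - k = i`) has absolute value at
most `n^i`. -/
theorem stmt10 (r : ℕ) (hr : 2 ≤ r)
    (L : List (Matrix (Fin r) (Fin r) ℤ))
    (hL : ∀ A ∈ L, ∃ i j : Fin r, i < j ∧
      (A = 1 + Matrix.single i j 1 ∨ A = 1 - Matrix.single i j 1)) :
    ∀ k l : Fin r, k < l →
      |L.prod k l| ≤ (L.length : ℤ) ^ ((l : ℕ) - (k : ℕ)) := by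
  exact (main_aux r L hL).2
end

section
/- The restricted wreath product $(\mathbb{Z} \wr \mathbb{Z}) \wr \mathbb{Z}$ is not a linear group: it admits no faithful finite-dimensional linear representation over any field. -/
/-- Key matrix lemma: no infinite family of pairwise-commuting,
individually non-commuting pairs of matrices. -/
lemma no_inf_pairs (n : ℕ) (F : Type) [Field F]
    (a b : ℕ → Matrix (Fin n) (Fin n) F)
    (hab : ∀ i k, i < k → a i * b k = b k * a i)
    (hbb : ∀ i k, i < k → b i * b k = b k * b i)
    (hne : ∀ k, a k * b k ≠ b k * a k) : False := by
  -- the descending chain of centralizers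
  set C : ℕ → Submodule F (Matrix (Fin n) (Fin n) F) := fun k =>
    Subalgebra.toSubmodule (Subalgebra.centralizer F
      {m : Matrix (Fin n) (Fin n) F | ∃ i < k, m = a i ∨ m = b i}) with hC
  have hmem : ∀ (k : ℕ) (x : Matrix (Fin n) (Fin n) F),
      x ∈ C k ↔ ∀ i < k, a i * x = x * a i ∧ b i * x = x * b i := by
    intro k x
    rw [hC]
    simp only [Subalgebra.mem_toSubmodule, Subalgebra.mem_centralizer_iff]
    constructor
    · intro h i hi
      exact ⟨h (a i) ⟨i, hi, Or.inl rfl⟩, h (b i) ⟨i, hi, Or.inr rfl⟩⟩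
    · rintro h g ⟨i, hi, rfl | rfl⟩
      · exact (h i hi).1
      · exact (h i hi).2
  have hstrict : ∀ k, C (k + 1) < C k := by
    intro k
    rw [lt_iff_le_and_ne]
    constructor
    · intro x hx
      rw [hmem] at hx ⊢
      intro i hi; exact hx i (by omega)
    · intro h
      have hb : b k ∈ C k := by
        rw [hmem]
        intro i hi
        exact ⟨hab i k hi, hbb i k hi⟩
      rw [← h, hmem] at hb
      exact hne k (hb k (by omega)).1
  have hrank : ∀ k, Module.finrank F (C (k + 1)) < Module.finrank F (C k) :=
    fun k => Submodule.finrank_lt_finrank_of_lt (hstrict k)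
  have hle : ∀ k, Module.finrank F (C k) + k ≤ Module.finrank F (C 0) := by
    intro k
    induction k with
    | zero => omega
    | succ m ih => have := hrank m; omega
  have := hle (Module.finrank F (C 0) + 1)
  omega

section deltas

variable {A : Type} [Group A]

/-- The element of the base supported at a single coordinate. -/
def wrDelta (i : ℤ) (g : A) : wrBase A :=
  ⟨fun n => if n = i then g else 1, by
    apply Set.Finite.subset (Set.finite_singleton i)
    intro n hn
    simp only [Function.mem_mulSupport] at hn
    by_contra h
    simp only [Set.mem_singleton_iff] at h
    exact hn (if_neg h)⟩

lemma wrDelta_apply (i n : ℤ) (g : A) :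
    ((wrDelta i g : wrBase A) : ∀ _ : ℤ, A) n = if n = i then g else 1 := rfl

lemma wrDelta_mul (i : ℤ) (g h : A) :
    wrDelta i g * wrDelta i h = wrDelta i (g * h) := by
  apply Subtype.ext
  funext n
  show (if n = i then g else 1) * (if n = i then h else 1) = _
  by_cases hn : n = i <;> simp [hn, wrDelta_apply]

lemma wrDelta_comm (i j : ℤ) (hij : i ≠ j) (g h : A) :
    wrDelta i g * wrDelta j h = wrDelta j h * wrDelta i g := by
  apply Subtype.ext
  funext n
  show (if n = i then g else 1) * (if n = j then h else 1)
      = (if n = j then h else 1) * (if n = i then g else 1)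
  by_cases h1 : n = i <;> by_cases h2 : n = j <;> simp_all

lemma wrDelta_inj (i : ℤ) {g h : A} (hgh : g ≠ h) :
    wrDelta i g ≠ wrDelta i h := by
  intro h'
  apply hgh
  have := congrFun (congrArg (Subtype.val) h') i
  simpa [wrDelta_apply] using this

end deltas

/-- The two generators of `ℤ ≀ ℤ` that do not commute. -/
def wrX : Wr (Multiplicative ℤ) :=
  SemidirectProduct.inl (wrDelta 0 (Multiplicative.ofAdd 1))

def wrY : Wr (Multiplicative ℤ) :=
  SemidirectProduct.inr (Multiplicative.ofAdd (1 : ℤ))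

lemma wrXY : wrX * wrY ≠ wrY * wrX := by
  intro h
  have hl := congrArg SemidirectProduct.left h
  simp only [SemidirectProduct.mul_left, wrX, wrY, SemidirectProduct.left_inl,
    SemidirectProduct.left_inr, SemidirectProduct.right_inl, SemidirectProduct.right_inr,
    map_one, one_mul, mul_one] at hl
  -- hl : wrDelta 0 (ofAdd 1) = wrAct _ (ofAdd 1) (wrDelta 0 (ofAdd 1))
  have h0 := congrFun (congrArg Subtype.val hl) 0
  rw [wrAct, zpowersHom_apply] at h0
  simp only [toAdd_ofAdd, zpow_one] at h0
  have hls : ((wrShift (Multiplicative ℤ)) (wrDelta 0 (Multiplicative.ofAdd 1)) :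
      ∀ _ : ℤ, Multiplicative ℤ) 0
      = ((wrDelta 0 (Multiplicative.ofAdd (1:ℤ)) : wrBase (Multiplicative ℤ)) :
      ∀ _ : ℤ, Multiplicative ℤ) (0 + 1) := rfl
  rw [← h0] at hls
  rw [wrDelta_apply, wrDelta_apply] at hls
  norm_num at hls
  


/-- The restricted wreath product `(ℤ ≀ ℤ) ≀ ℤ` is not linear:
it admits no faithful finite-dimensional linear representation over any field. -/
theorem stmt16 :
    ¬ ∃ (n : ℕ) (F : Type) (_ : Field F)
        (φ : Wr (Wr (Multiplicative ℤ)) →* GL (Fin n) F),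
      Function.Injective φ := by
  rintro ⟨n, F, hF, φ, hφ⟩
  set P : ℕ → Wr (Wr (Multiplicative ℤ)) :=
    fun i => SemidirectProduct.inl (wrDelta (i : ℤ) wrX) with hP
  set Q : ℕ → Wr (Wr (Multiplicative ℤ)) :=
    fun i => SemidirectProduct.inl (wrDelta (i : ℤ) wrY) with hQ
  have hPQ : ∀ i k : ℕ, i ≠ k → P i * Q k = Q k * P i := by
    intro i k hik
    rw [hP, hQ]
    show SemidirectProduct.inl _ * SemidirectProduct.inl _ = _
    rw [← map_mul, ← map_mul, wrDelta_comm _ _ (by exact_mod_cast hik)]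
  have hQQ : ∀ i k : ℕ, i ≠ k → Q i * Q k = Q k * Q i := by
    intro i k hik
    rw [hQ]
    show SemidirectProduct.inl _ * SemidirectProduct.inl _ = _
    rw [← map_mul, ← map_mul, wrDelta_comm _ _ (by exact_mod_cast hik)]
  have hne : ∀ k : ℕ, P k * Q k ≠ Q k * P k := by
    intro k h
    rw [hP, hQ] at h
    simp only at h
    rw [← map_mul, ← map_mul, wrDelta_mul, wrDelta_mul] at h
    exact wrDelta_inj (k : ℤ) wrXY (SemidirectProduct.inl_injective h)
  apply no_inf_pairs n F (fun i => ((φ (P i) : GL (Fin n) F) : Matrix (Fin n) (Fin n) F))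
    (fun i => ((φ (Q i) : GL (Fin n) F) : Matrix (Fin n) (Fin n) F))
  · intro i k hik
    rw [← Units.val_mul, ← Units.val_mul, ← map_mul φ, ← map_mul φ, hPQ i k (by omega)]
  · intro i k hik
    rw [← Units.val_mul, ← Units.val_mul, ← map_mul φ, ← map_mul φ, hQQ i k (by omega)]
  · intro k h
    apply hne k
    apply hφ
    rw [map_mul, map_mul]
    exact Units.ext h
end
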